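/- arXiv:0911.0696 — 3 statements merged into one kernel-verified Lean document; each statement's English description precedes it below -/
import Mathlib

section
/- Let A be an M × N real matrix with nonnegative entries, M < N. Define R(λ_1,...,λ_N) = Σ_{S ⊆ {1,...,N}, |S| = M} per(A_S) · Π_{j ∈ S̄} λ_j, where A_S is the M × M submatrix of A on columns S, S̄ = {1,...,N} \ S, and per denotes the permanent. Then R is a homogeneous polynomial of degree N − M with nonnegative real coefficients, and R is either identically zero or H-stable. -/
open Finset

/-- The permanent of a square real matrix. -/
noncomputable def permanent {n : ℕ} (B : Matrix (Fin n) (Fin n) ℝ) : ℝ :=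
  ∑ σ : Equiv.Perm (Fin n), ∏ i, B i (σ i)

/-- A multivariate real polynomial is H-stable if it does not vanish at any point
all of whose coordinates have positive real part. -/
def Hstable {σ : Type*} (p : MvPolynomial σ ℝ) : Prop :=
  ∀ z : σ → ℂ, (∀ i, 0 < (z i).re) → MvPolynomial.aeval z p ≠ 0

/-- The polynomial `R = Σ_{|S| = M} per(A_S) Π_{j ∉ S} X_j`. -/
noncomputable def Rpoly {M N : ℕ} (A : Matrix (Fin M) (Fin N) ℝ) :
    MvPolynomial (Fin N) ℝ :=
  ∑ S ∈ (Finset.powersetCard M (Finset.univ : Finset (Fin N))).attach,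
    MvPolynomial.C (permanent (Matrix.of fun i k =>
      A i ((S.1.orderIsoOfFin ((Finset.mem_powersetCard.mp S.2).2)) k))) *
      ∏ j ∈ S.1ᶜ, MvPolynomial.X j

noncomputable def Eval {M N : ℕ} (A : Matrix (Fin M) (Fin N) ℝ) (z : Fin N → ℂ) : ℂ :=
  ∑ f : Fin M ↪ Fin N, (∏ i, (A i (f i) : ℂ)) * ∏ j ∈ (Finset.univ.image f)ᶜ, z j

lemma hurwitz_ratio (p : Polynomial ℂ) (h0 : p.eval 0 ≠ 0)
    (hnz : ∀ t : ℂ, 0 ≤ t.re → p.eval t ≠ 0) :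
    0 ≤ (p.derivative.eval 0 / p.eval 0).re := by
  suffices H : ∀ n (p : Polynomial ℂ), p.natDegree = n → p.eval 0 ≠ 0 →
      (∀ t : ℂ, 0 ≤ t.re → p.eval t ≠ 0) → 0 ≤ (p.derivative.eval 0 / p.eval 0).re from
    H p.natDegree p rfl h0 hnz
  intro n
  induction n using Nat.strong_induction_on with
  | _ n IH =>
    intro p hdeg h0 hnz
    rcases Nat.eq_zero_or_pos n with hn | hn
    · subst hn
      obtain ⟨a, rfl⟩ := Polynomial.natDegree_eq_zero.mp hdeg
      simp
    · have hdpos : 0 < p.degree := Polynomial.natDegree_pos_iff_degree_pos.mp (hdeg ▸ hn)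
      obtain ⟨r, hr⟩ := Complex.exists_root hdpos
      obtain ⟨q, hq⟩ := (Polynomial.dvd_iff_isRoot.mpr hr)
      have hrre : r.re < 0 := by
        by_contra h
        exact hnz r (le_of_not_gt h) hr
      have hrne : r ≠ 0 := fun h => by simp [h] at hrre
      have hp0 : p.eval 0 = (-r) * q.eval 0 := by simp [hq]
      have hq0 : q.eval 0 ≠ 0 := by
        intro h; apply h0; simp [hp0, h]
      have hqnz : ∀ t : ℂ, 0 ≤ t.re → q.eval t ≠ 0 := by
        intro t ht h
        exact hnz t ht (by simp [hq, h])
      have hqne : q ≠ 0 := fun h => hq0 (by simp [h])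
      have hdq : q.natDegree < n := by
        have : p.natDegree = 1 + q.natDegree := by
          rw [hq, Polynomial.natDegree_mul (Polynomial.X_sub_C_ne_zero r) hqne,
            Polynomial.natDegree_X_sub_C]
        omega
      have hIH := IH q.natDegree hdq q rfl hq0 hqnz
      have hder : p.derivative.eval 0 = q.eval 0 + (-r) * q.derivative.eval 0 := by
        rw [hq, Polynomial.derivative_mul]
        simp
      have hsplit : p.derivative.eval 0 / p.eval 0 = 1 / (-r) + q.derivative.eval 0 / q.eval 0 := by
        rw [hder, hp0]
        have hnr : (-r : ℂ) ≠ 0 := neg_ne_zero.mpr hrne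
        field_simp
        ring
      rw [hsplit, Complex.add_re]
      have h1 : 0 < (1 / (-r) : ℂ).re := by
        rw [one_div, Complex.inv_re]
        apply div_pos (by simpa using hrre)
        simpa [Complex.normSq_pos] using neg_ne_zero.mpr hrne
      linarith


lemma linprod_coeff_one {α : Type*} [DecidableEq α] (T : Finset α) (a b : α → ℂ) :
    (∏ j ∈ T, (Polynomial.C (a j) + Polynomial.C (b j) * Polynomial.X)).coeff 1 =
      ∑ k ∈ T, b k * ∏ j ∈ T.erase k, a j := by
  induction T using Finset.induction_on with
  | empty => simp [Polynomial.coeff_one]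
  | @insert k T hk ih =>
    rw [Finset.prod_insert hk, Finset.sum_insert hk]
    have hexp : (Polynomial.C (a k) + Polynomial.C (b k) * Polynomial.X) *
        (∏ j ∈ T, (Polynomial.C (a j) + Polynomial.C (b j) * Polynomial.X)) =
        Polynomial.C (a k) * (∏ j ∈ T, (Polynomial.C (a j) + Polynomial.C (b j) * Polynomial.X))
        + Polynomial.C (b k) * (Polynomial.X *
          (∏ j ∈ T, (Polynomial.C (a j) + Polynomial.C (b j) * Polynomial.X))) := by
      ring
    rw [hexp]
    rw [Polynomial.coeff_add, Polynomial.coeff_C_mul, Polynomial.coeff_C_mul,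
      Polynomial.coeff_X_mul, ih]
    have hc0 : (∏ j ∈ T, (Polynomial.C (a j) + Polynomial.C (b j) * Polynomial.X)).coeff 0
        = ∏ j ∈ T, a j := by
      rw [Polynomial.coeff_zero_eq_eval_zero]
      simp [Polynomial.eval_prod]
    rw [hc0, Finset.erase_insert hk, Finset.mul_sum]
    rw [Finset.sum_congr rfl (fun j hj => ?_)]
    · ring
    · rw [Finset.erase_insert_of_ne (by rintro rfl; exact hk hj) ,
        Finset.prod_insert (fun h => hk (Finset.mem_of_mem_erase h))]
      ring


lemma image_mem_powersetCard {M N : ℕ} (f : Fin M ↪ Fin N) :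
    (Finset.univ.image f) ∈ Finset.powersetCard M (Finset.univ : Finset (Fin N)) := by
  rw [Finset.mem_powersetCard]
  refine ⟨Finset.subset_univ _, ?_⟩
  rw [Finset.card_image_of_injective _ f.injective, Finset.card_univ, Fintype.card_fin]

lemma aeval_Rpoly {M N : ℕ} (A : Matrix (Fin M) (Fin N) ℝ) (z : Fin N → ℂ) :
    MvPolynomial.aeval z (Rpoly A) = Eval A z := by
  classical
  rw [Rpoly, map_sum]
  rw [Eval]
  rw [← Finset.sum_fiberwise_of_maps_to
    (g := fun f : Fin M ↪ Fin N =>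
      (⟨Finset.univ.image f, image_mem_powersetCard f⟩ :
        {x // x ∈ Finset.powersetCard M (Finset.univ : Finset (Fin N))}))
    (fun f _ => Finset.mem_attach _ _)]
  refine Finset.sum_congr rfl (fun S _ => ?_)
  rw [map_mul, MvPolynomial.aeval_C, map_prod]
  simp only [MvPolynomial.aeval_X]
  have hfilter : ∀ f ∈ Finset.univ.filter (fun f : Fin M ↪ Fin N =>
      (⟨Finset.univ.image f, image_mem_powersetCard f⟩ :
        {x // x ∈ Finset.powersetCard M (Finset.univ : Finset (Fin N))}) = S),
      Finset.univ.image f = S.1 := by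
    intro f hf
    have := (Finset.mem_filter.mp hf).2
    exact congrArg Subtype.val this
  rw [Finset.sum_congr rfl (fun f hf => by rw [hfilter f hf])]
  rw [← Finset.sum_mul]
  congr 1
  -- ∑ f with image S of ∏ ↑(A i (f i)) = ↑(per ...)
  rw [permanent]
  push_cast
  set mono := S.1.orderIsoOfFin ((Finset.mem_powersetCard.mp S.2).2) with hmono
  have key : (∑ σ : Equiv.Perm (Fin M), ∏ i, ((A i (mono (σ i)) : ℝ) : ℂ)) =
      ∑ f ∈ Finset.univ.filter (fun f : Fin M ↪ Fin N =>
        (⟨Finset.univ.image f, image_mem_powersetCard f⟩ :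
          {x // x ∈ Finset.powersetCard M (Finset.univ : Finset (Fin N))}) = S),
        ∏ i, ((A i (f i) : ℝ) : ℂ) := by
    refine Finset.sum_bij (fun (σ : Equiv.Perm (Fin M)) _ =>
      (⟨fun i => (mono (σ i) : Fin N),
        fun i j hij => σ.injective ((mono).injective (Subtype.ext hij))⟩ : Fin M ↪ Fin N))
      ?_ ?_ ?_ ?_
    · intro σ _
      rw [Finset.mem_filter]
      refine ⟨Finset.mem_univ _, Subtype.ext ?_⟩
      ext x
      simp only [Finset.mem_image, Finset.mem_univ, true_and, Function.Embedding.coeFn_mk]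
      constructor
      · rintro ⟨i, rfl⟩
        exact (mono (σ i)).2
      · intro hx
        exact ⟨σ.symm (mono.symm ⟨x, hx⟩), by show ((mono (σ (σ.symm (mono.symm ⟨x, hx⟩)))) : Fin N) = x; simp⟩
    · intro σ1 _ σ2 _ h
      ext i
      have hi := congrFun (congrArg (fun (f : Fin M ↪ Fin N) => (f : Fin M → Fin N)) h) i
      change ((mono (σ1 i)) : Fin N) = mono (σ2 i) at hi
      exact congrArg Fin.val (mono.injective (Subtype.ext hi))
    · intro f hf
      have himg : Finset.univ.image f = S.1 := hfilter f hf
      have hmem : ∀ i, f i ∈ S.1 := fun i => himg ▸ Finset.mem_image_of_mem f (Finset.mem_univ i)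
      have hinj : Function.Injective (fun i => mono.symm ⟨f i, hmem i⟩) := by
        intro i j hij
        exact f.injective (Subtype.ext_iff.mp (mono.symm.injective hij))
      obtain hbij := Finite.injective_iff_bijective.mp hinj
      refine ⟨Equiv.ofBijective _ hbij, Finset.mem_univ _, ?_⟩
      ext i
      simp only [Function.Embedding.coeFn_mk, Equiv.ofBijective_apply]
      rw [OrderIso.apply_symm_apply]
    · intro σ _
      rfl
  simp only [Matrix.of_apply]
  exact key


lemma image_cons {M N : ℕ} (k : Fin N) (f' : Fin M → Fin N) :
    Finset.univ.image (Fin.cons k f' : Fin (M+1) → Fin N)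
      = insert k (Finset.univ.image f') := by
  ext x
  simp only [Finset.mem_image, Finset.mem_univ, true_and, Finset.mem_insert]
  constructor
  · rintro ⟨i, rfl⟩
    induction i using Fin.cases with
    | zero => left; rfl
    | succ i => right; exact ⟨i, rfl⟩
  · rintro (rfl | ⟨i, rfl⟩)
    · exact ⟨0, rfl⟩
    · exact ⟨i.succ, rfl⟩

lemma Eval_succ {M N : ℕ} (A : Matrix (Fin (M+1)) (Fin N) ℝ) (z : Fin N → ℂ) :
    Eval A z = ∑ f' : Fin M ↪ Fin N, (∏ i, (A i.succ (f' i) : ℂ)) *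
      ∑ k ∈ (Finset.univ.image f')ᶜ, (A 0 k : ℂ) *
        ∏ j ∈ ((Finset.univ.image f')ᶜ).erase k, z j := by
  classical
  rw [Eval]
  simp only [Finset.mul_sum]
  rw [Finset.sum_sigma']
  symm
  refine Finset.sum_bij (fun (x : Σ _ : Fin M ↪ Fin N, Fin N) hx =>
    (⟨Fin.cons x.2 ⇑x.1, Fin.cons_injective_iff.mpr
      ⟨by
        have hx2 := (Finset.mem_sigma.mp hx).2
        rw [Finset.mem_compl] at hx2
        intro hc
        obtain ⟨i, hi⟩ := hc
        exact hx2 (hi ▸ Finset.mem_image_of_mem _ (Finset.mem_univ i)),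
        x.1.injective⟩⟩ : Fin (M+1) ↪ Fin N)) ?_ ?_ ?_ ?_
  · intro x _; exact Finset.mem_univ _
  · intro x hx y hy h
    have h' := congrArg (fun (f : Fin (M+1) ↪ Fin N) => (f : Fin (M+1) → Fin N)) h
    simp only [Function.Embedding.coeFn_mk] at h'
    have h0 : x.2 = y.2 := by
      have := congrFun h' 0; simpa using this
    have hs : ⇑x.1 = ⇑y.1 := by
      funext i
      have := congrFun h' i.succ; simpa using this
    obtain ⟨x1, x2⟩ := x; obtain ⟨y1, y2⟩ := y
    simp only at h0 hs
    cases Function.Embedding.coe_injective hs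
    cases h0
    rfl
  · intro f _
    refine ⟨⟨⟨f ∘ Fin.succ, f.injective.comp (Fin.succ_injective _)⟩, f 0⟩, ?_, ?_⟩
    · rw [Finset.mem_sigma]
      refine ⟨Finset.mem_univ _, Finset.mem_compl.mpr ?_⟩
      intro hc
      rw [Finset.mem_image] at hc
      obtain ⟨i, _, hi⟩ := hc
      exact (Fin.succ_ne_zero i) (f.injective hi)
    · ext i : 1
      simp only [Function.Embedding.coeFn_mk]
      exact congrFun (Fin.cons_self_tail (f : Fin (M+1) → Fin N)) i
  · intro x hx
    have hx2 := (Finset.mem_sigma.mp hx).2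
    simp only [Function.Embedding.coeFn_mk]
    rw [image_cons, Finset.compl_insert]
    rw [Fin.prod_univ_succ]
    simp only [Fin.cons_zero, Fin.cons_succ]
    ring


lemma Eval_one {M N : ℕ} (B : Matrix (Fin M) (Fin N) ℝ) :
    Eval B (fun _ => 1) = ((∑ f : Fin M ↪ Fin N, ∏ i, B i (f i) : ℝ) : ℂ) := by
  rw [Eval]
  push_cast
  simp


lemma ratio_nonneg {M N : ℕ} (A : Matrix (Fin (M+1)) (Fin N) ℝ) (hA : ∀ i j, 0 ≤ A i j)
    (hstab : ∀ w : Fin N → ℂ, (∀ j, 0 < (w j).re) →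
      Eval (Matrix.of fun i j => A i.succ j) w ≠ 0)
    (z : Fin N → ℂ) (hz : ∀ j, 0 < (z j).re) :
    0 ≤ (Eval A z / Eval (Matrix.of fun i j => A i.succ j) z).re := by
  classical
  set A' : Matrix (Fin M) (Fin N) ℝ := Matrix.of fun i j => A i.succ j with hA'
  set p : Polynomial ℂ := ∑ f' : Fin M ↪ Fin N,
    Polynomial.C (∏ i, (A i.succ (f' i) : ℂ)) *
      ∏ j ∈ (Finset.univ.image ⇑f')ᶜ,
        (Polynomial.C (z j) + Polynomial.C ((A 0 j : ℝ) : ℂ) * Polynomial.X) with hp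
  have heval : ∀ t : ℂ, p.eval t = Eval A' (fun j => z j + (A 0 j : ℂ) * t) := by
    intro t
    rw [hp, Polynomial.eval_finset_sum, Eval]
    refine Finset.sum_congr rfl (fun f' _ => ?_)
    rw [Polynomial.eval_mul, Polynomial.eval_C, Polynomial.eval_prod]
    simp only [Polynomial.eval_add, Polynomial.eval_mul, Polynomial.eval_C, Polynomial.eval_X,
      hA', Matrix.of_apply]
  have h0 : p.eval 0 ≠ 0 := by
    rw [heval 0]
    have : (fun j => z j + (A 0 j : ℂ) * 0) = z := by funext j; ring
    rw [this]
    exact hstab z hz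
  have hnz : ∀ t : ℂ, 0 ≤ t.re → p.eval t ≠ 0 := by
    intro t ht
    rw [heval t]
    apply hstab
    intro j
    have hre : (z j + (A 0 j : ℂ) * t).re = (z j).re + (A 0 j) * t.re := by
      simp [Complex.add_re, Complex.mul_re]
    rw [hre]
    have := mul_nonneg (hA 0 j) ht
    linarith [hz j]
  have hc0 : p.coeff 0 = Eval A' z := by
    rw [Polynomial.coeff_zero_eq_eval_zero, heval 0]
    congr 1
    funext j; ring
  have hc1 : p.coeff 1 = Eval A z := by
    rw [hp, Polynomial.finset_sum_coeff]
    rw [Eval_succ A z]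
    refine Finset.sum_congr rfl (fun f' _ => ?_)
    rw [Polynomial.coeff_C_mul, linprod_coeff_one]
  have hder : p.derivative.eval 0 = p.coeff 1 := by
    rw [← Polynomial.coeff_zero_eq_eval_zero, Polynomial.coeff_derivative]
    simp
  have := hurwitz_ratio p h0 hnz
  rwa [hder, hc1, ← Polynomial.coeff_zero_eq_eval_zero, hc0] at this

lemma step_stable {M N : ℕ} (A : Matrix (Fin (M+1)) (Fin N) ℝ) (hA : ∀ i j, 0 ≤ A i j)
    (hstab : ∀ w : Fin N → ℂ, (∀ j, 0 < (w j).re) →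
      Eval (Matrix.of fun i j => A i.succ j) w ≠ 0)
    (hs : 0 < ∑ f : Fin (M+1) ↪ Fin N, ∏ i, A i (f i)) :
    ∀ z : Fin N → ℂ, (∀ j, 0 < (z j).re) → Eval A z ≠ 0 := by
  classical
  intro z₀ hz₀ hzero
  set A' : Matrix (Fin M) (Fin N) ℝ := Matrix.of fun i j => A i.succ j with hA'
  set y : ℂ → (Fin N → ℂ) := fun s j => z₀ j + s * (1 - z₀ j) with hy
  set Ω : Set ℂ := {s | ∀ j, 0 < ((y s) j).re} with hΩ
  have hy0 : y 0 = z₀ := by funext j; simp [hy]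
  have hy1 : y 1 = fun _ => 1 := by funext j; simp [hy]
  have h0Ω : (0 : ℂ) ∈ Ω := by rw [hΩ, Set.mem_setOf_eq, hy0]; exact hz₀
  have h1Ω : (1 : ℂ) ∈ Ω := by rw [hΩ, Set.mem_setOf_eq, hy1]; simp
  have hΩo : IsOpen Ω := by
    have : Ω = ⋂ j, {s : ℂ | 0 < ((y s) j).re} := by
      rw [hΩ]; ext s; simp [Set.mem_iInter]
    rw [this]
    refine isOpen_iInter_of_finite (fun j => ?_)
    have hcont : Continuous (fun s : ℂ => ((y s) j).re) :=
      Complex.continuous_re.comp (continuous_const.add (continuous_id.mul continuous_const))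
    exact isOpen_lt continuous_const hcont
  have hconv : Convex ℝ Ω := by
    intro a ha b hb pp qq hp hq hpq
    intro j
    have h1 := ha j
    have h2 := hb j
    have hkey : ((y (pp • a + qq • b)) j).re
        = pp * ((y a) j).re + qq * ((y b) j).re := by
      simp only [hy, Complex.add_re, Complex.mul_re, Complex.sub_re, Complex.sub_im,
        Complex.one_re, Complex.one_im, Complex.add_im, Complex.mul_im, Complex.smul_re,
        Complex.smul_im, smul_eq_mul]
      first
      | linear_combination (-(z₀ j).re) * hpq
      | linear_combination (z₀ j).re * hpq
    rw [hkey]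
    rcases hp.lt_or_eq with h | h
    · nlinarith [mul_nonneg hq h2.le]
    · nlinarith [mul_pos (show (0:ℝ) < qq by nlinarith) h2]
  have hdiffE : ∀ (m : ℕ) (B : Matrix (Fin m) (Fin N) ℝ),
      Differentiable ℂ (fun s => Eval B (y s)) := by
    intro m B
    simp only [Eval]
    apply Differentiable.fun_sum
    intro f _
    apply Differentiable.mul (differentiable_const _)
    apply Differentiable.fun_finsetProd
    intro j _
    exact (differentiable_const _).add (differentiable_id.mul (differentiable_const _))
  have hdenne : ∀ s ∈ Ω, Eval A' (y s) ≠ 0 := fun s hs' => hstab (y s) hs'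
  set g : ℂ → ℂ := fun s => Complex.exp (-(Eval A (y s) / Eval A' (y s))) with hg
  have hdiffg : DifferentiableOn ℂ g Ω := by
    apply DifferentiableOn.cexp
    apply DifferentiableOn.neg
    exact DifferentiableOn.div (hdiffE _ A).differentiableOn
      (hdiffE _ A').differentiableOn hdenne
  have hratio : ∀ s ∈ Ω, 0 ≤ (Eval A (y s) / Eval A' (y s)).re := by
    intro s hs'
    exact ratio_nonneg A hA hstab (y s) hs'
  have hg0 : g 0 = 1 := by
    rw [hg]
    simp only [hy0, hzero]
    simp
  have hmax : IsMaxOn (norm ∘ g) Ω 0 := by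
    intro s hs'
    show ‖g s‖ ≤ ‖g 0‖
    rw [hg0]
    simp only [hg, Complex.norm_exp, Complex.neg_re]
    calc Real.exp (-(Eval A (y s) / Eval A' (y s)).re) ≤ Real.exp 0 := by
          rw [Real.exp_le_exp]; linarith [hratio s hs']
      _ = ‖(1 : ℂ)‖ := by simp
  have heq := Complex.eqOn_of_isPreconnected_of_isMaxOn_norm hconv.isPreconnected hΩo
    hdiffg h0Ω hmax
  have hg1 : g 1 = 1 := by
    have := heq h1Ω
    simp only [Function.const_apply, hg0] at this
    exact this
  -- contradiction with values at the all-ones point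
  set S : ℝ := ∑ f : Fin (M+1) ↪ Fin N, ∏ i, A i (f i) with hS
  set S' : ℝ := ∑ f : Fin M ↪ Fin N, ∏ i, A' i (f i) with hS'
  have hS'nonneg : 0 ≤ S' := by
    apply Finset.sum_nonneg
    intro f _
    exact Finset.prod_nonneg (fun i _ => hA _ _)
  have hES : Eval A (y 1) = (S : ℂ) := by rw [hy1, Eval_one]
  have hES' : Eval A' (y 1) = (S' : ℂ) := by rw [hy1, Eval_one]
  have hS'ne : S' ≠ 0 := by
    intro h
    apply hdenne 1 h1Ω
    rw [hES', h, Complex.ofReal_zero]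
  have hS'pos : 0 < S' := lt_of_le_of_ne hS'nonneg (Ne.symm hS'ne)
  have : ‖g 1‖ = Real.exp (-(S / S')) := by
    rw [hg]
    simp only [hES, hES', Complex.norm_exp, Complex.neg_re]
    rw [← Complex.ofReal_div, Complex.ofReal_re]
  rw [hg1] at this
  simp only [norm_one] at this
  have h2 : Real.exp (-(S/S')) = Real.exp 0 := by rw [Real.exp_zero]; exact this.symm
  have h3 : -(S/S') = 0 := Real.exp_eq_exp.mp h2
  have h4 : S = 0 := by
    rw [neg_eq_zero] at h3
    rcases div_eq_zero_iff.mp h3 with h | h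
    · exact h
    · exact absurd h hS'ne
  exact absurd h4 (ne_of_gt hs)


lemma main_ind : ∀ (M : ℕ) {N : ℕ} (A : Matrix (Fin M) (Fin N) ℝ), (∀ i j, 0 ≤ A i j) →
    ((∀ z : Fin N → ℂ, (∀ j, 0 < (z j).re) → Eval A z ≠ 0) ∨
      (∀ f : Fin M ↪ Fin N, ∏ i, A i (f i) = 0)) := by
  intro M
  induction M with
  | zero =>
    intro N A _
    left
    intro z hz
    rw [Eval]
    rw [Fintype.sum_unique (ι := Fin 0 ↪ Fin N)]
    have himg : (Finset.univ.image (default : Fin 0 ↪ Fin N))ᶜ = Finset.univ := by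
      simp
    rw [himg]
    simp only [Finset.univ_eq_empty, Finset.prod_empty, one_mul]
    rw [Finset.prod_ne_zero_iff]
    intro j _ h
    have := hz j
    rw [h] at this
    simp at this
  | succ M IH =>
    intro N A hA
    rcases IH (Matrix.of fun i j => A i.succ j) (fun i j => hA i.succ j) with hstab | hzero
    · rcases eq_or_lt_of_le (Finset.sum_nonneg (fun (f : Fin (M+1) ↪ Fin N) _ =>
        Finset.prod_nonneg (fun i _ => hA i (f i)))) with hs | hs
      · right
        intro f
        have := (Finset.sum_eq_zero_iff_of_nonneg (fun (f : Fin (M+1) ↪ Fin N) _ =>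
          Finset.prod_nonneg (fun i _ => hA i (f i)))).mp hs.symm
        exact this f (Finset.mem_univ f)
      · left
        exact step_stable A hA hstab hs
    · right
      intro f
      rw [Fin.prod_univ_succ]
      have : (∏ i : Fin M, A i.succ (f i.succ)) = 0 := by
        have := hzero ⟨fun i => f i.succ, fun i j hij =>
          Fin.succ_injective _ (f.injective hij)⟩
        exact this
      rw [this, mul_zero]

theorem stmt11 {M N : ℕ} (hMN : M < N) (A : Matrix (Fin M) (Fin N) ℝ)
    (hA : ∀ i j, 0 ≤ A i j) :
    (Rpoly A).IsHomogeneous (N - M) ∧ (∀ c, 0 ≤ (Rpoly A).coeff c) ∧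
      (Rpoly A = 0 ∨ Hstable (Rpoly A)) := by
  classical
  have hpernn : ∀ (S : {x // x ∈ Finset.powersetCard M (Finset.univ : Finset (Fin N))}),
      0 ≤ permanent (Matrix.of fun i k =>
        A i ((S.1.orderIsoOfFin ((Finset.mem_powersetCard.mp S.2).2)) k)) := by
    intro S
    apply Finset.sum_nonneg
    intro σ _
    exact Finset.prod_nonneg (fun i _ => hA _ _)
  refine ⟨?_, ?_, ?_⟩
  · -- homogeneous
    rw [Rpoly]
    apply MvPolynomial.IsHomogeneous.sum
    intro S _
    have hcard : (S.1)ᶜ.card = N - M := by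
      rw [Finset.card_compl, (Finset.mem_powersetCard.mp S.2).2, Fintype.card_fin]
    have h1 : ((∏ j ∈ S.1ᶜ, MvPolynomial.X j : MvPolynomial (Fin N) ℝ)).IsHomogeneous (N - M) := by
      have := MvPolynomial.IsHomogeneous.prod (S.1)ᶜ
        (fun j => (MvPolynomial.X j : MvPolynomial (Fin N) ℝ)) (fun _ => 1)
        (fun j _ => MvPolynomial.isHomogeneous_X _ _)
      simpa [hcard] using this
    simpa using (MvPolynomial.isHomogeneous_C (Fin N) _).mul h1
  · -- nonneg coefficients
    intro c
    rw [Rpoly, MvPolynomial.coeff_sum]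
    apply Finset.sum_nonneg
    intro S _
    rw [MvPolynomial.coeff_C_mul]
    apply mul_nonneg (hpernn S)
    -- coefficients of products of X are nonneg
    have : ∀ (T : Finset (Fin N)) (d : (Fin N) →₀ ℕ),
        0 ≤ (∏ j ∈ T, (MvPolynomial.X j : MvPolynomial (Fin N) ℝ)).coeff d := by
      intro T
      induction T using Finset.induction_on with
      | empty => intro d; simp [MvPolynomial.coeff_one]; positivity
      | @insert k T hk ih =>
        intro d
        rw [Finset.prod_insert hk, MvPolynomial.coeff_mul]
        apply Finset.sum_nonneg
        intro x _
        apply mul_nonneg _ (ih _)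
        rw [MvPolynomial.coeff_X']
        positivity
    exact this _ c
  · -- dichotomy
    rcases main_ind M A hA with hstab | hzero
    · right
      intro z hz
      rw [aeval_Rpoly]
      exact hstab z hz
    · left
      rw [Rpoly]
      apply Finset.sum_eq_zero
      intro S _
      have hper : permanent (Matrix.of fun i k =>
          A i ((S.1.orderIsoOfFin ((Finset.mem_powersetCard.mp S.2).2)) k)) = 0 := by
        rw [permanent]
        apply Finset.sum_eq_zero
        intro σ _
        have := hzero ⟨fun i => ((S.1.orderIsoOfFin ((Finset.mem_powersetCard.mp S.2).2)) (σ i) : Fin N),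
          fun i j hij => σ.injective ((S.1.orderIsoOfFin _).injective (Subtype.ext hij))⟩
        simpa using this
      rw [hper]
      simp
end

section
/- Let R be a multilinear homogeneous polynomial of degree N − M in N variables with nonnegative real coefficients that is H-stable, and define the polynomial q(λ_1,...,λ_N) = (Π_{1 ≤ i ≤ N} λ_i) · R(λ_1^{-1}, ..., λ_N^{-1}) (interpreted by clearing denominators, so that q is a multilinear homogeneous polynomial of degree M whose coefficient of Π_{j ∈ S} λ_j equals the coefficient of Π_{j ∉ S} λ_j in R). Then q is H-stable. -/
open MvPolynomial Finset

/-- The exponent (multidegree) of the squarefree monomial `Π_{j ∈ S} λ_j`. -/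
noncomputable def expS {N : ℕ} (S : Finset (Fin N)) : Fin N →₀ ℕ :=
  ∑ j ∈ S, Finsupp.single j 1

lemma expS_apply {N : ℕ} (S : Finset (Fin N)) (j : Fin N) :
    expS S j = if j ∈ S then 1 else 0 := by
  classical
  simp only [expS, Finsupp.finset_sum_apply, Finsupp.single_apply]
  simp [Finset.sum_ite_eq]

lemma expS_support {N : ℕ} (S : Finset (Fin N)) : (expS S).support = S := by
  ext j
  simp [Finsupp.mem_support_iff, expS_apply]

lemma expS_inj {N : ℕ} : Function.Injective (expS (N := N)) := by
  intro S T h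
  rw [← expS_support S, ← expS_support T, h]

lemma aeval_expS_monomial {N : ℕ} (z : Fin N → ℂ) (S : Finset (Fin N)) (r : ℝ) :
    MvPolynomial.aeval z (MvPolynomial.monomial (expS S) r) = (r : ℂ) * ∏ j ∈ S, z j := by
  rw [MvPolynomial.aeval_monomial]
  congr 1
  rw [Finsupp.prod, expS_support]
  exact Finset.prod_congr rfl fun j hj => by rw [expS_apply, if_pos hj, pow_one]

theorem stmt12 {M N : ℕ} (hMN : M ≤ N) (R : MvPolynomial (Fin N) ℝ)
    (hmul : ∀ c ∈ R.support, ∀ i, c i ≤ 1)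
    (hhom : R.IsHomogeneous (N - M))
    (hcoeff : ∀ c, 0 ≤ R.coeff c)
    (hstab : Hstable R) :
    Hstable (∑ S ∈ Finset.powersetCard M (Finset.univ : Finset (Fin N)),
      MvPolynomial.monomial (expS S) (R.coeff (expS Sᶜ))) := by
  classical
  -- R equals the sum over all (N-M)-subsets of its squarefree monomials
  have hR : R = ∑ T ∈ Finset.powersetCard (N - M) (Finset.univ : Finset (Fin N)),
      MvPolynomial.monomial (expS T) (R.coeff (expS T)) := by
    have hsub : R.support ⊆ (Finset.powersetCard (N - M)
        (Finset.univ : Finset (Fin N))).image expS := by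
      intro c hc
      have hc0 : R.coeff c ≠ 0 := MvPolynomial.mem_support_iff.mp hc
      have hdeg : c.degree = N - M := by
        rw [Finsupp.degree_eq_weight_one]; exact hhom hc0
      have hc1 : ∀ j, c j ≤ 1 := hmul c hc
      have hce : c = expS c.support := by
        ext j
        rw [expS_apply]
        by_cases hj : j ∈ c.support
        · rw [if_pos hj]
          have := Finsupp.mem_support_iff.mp hj
          have := hc1 j
          omega
        · rw [if_neg hj]
          exact Finsupp.notMem_support_iff.mp hj
      have hcard : c.support.card = N - M := by
        have : ∑ i ∈ c.support, c i = N - M := hdeg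
        rw [← this]
        rw [Finset.card_eq_sum_ones]
        refine Finset.sum_congr rfl fun j hj => ?_
        have h1 := Finsupp.mem_support_iff.mp hj
        have h2 := hc1 j
        omega
      refine Finset.mem_image.mpr ⟨c.support, ?_, hce.symm⟩
      exact Finset.mem_powersetCard.mpr ⟨Finset.subset_univ _, hcard⟩
    have himg : (∑ T ∈ Finset.powersetCard (N - M) (Finset.univ : Finset (Fin N)),
        MvPolynomial.monomial (expS T) (R.coeff (expS T)))
        = ∑ c ∈ (Finset.powersetCard (N - M)
          (Finset.univ : Finset (Fin N))).image expS,
          MvPolynomial.monomial c (R.coeff c) :=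
      (Finset.sum_image (f := fun c => MvPolynomial.monomial c (R.coeff c)) (g := expS)
        (fun S _ T _ h => expS_inj h)).symm
    rw [himg]
    conv_lhs => rw [← MvPolynomial.support_sum_monomial_coeff R]
    refine Finset.sum_subset hsub fun c _ hc => ?_
    rw [MvPolynomial.notMem_support_iff.mp hc, MvPolynomial.monomial_zero]
  intro z hz
  have hzne : ∀ i, z i ≠ 0 := fun i h => by simpa [h] using hz i
  set w : Fin N → ℂ := fun i => (z i)⁻¹ with hw
  have hwre : ∀ i, 0 < (w i).re := by
    intro i
    rw [hw]
    simp only [Complex.inv_re]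
    exact div_pos (hz i) (Complex.normSq_pos.mpr (hzne i))
  have hRw : MvPolynomial.aeval w R ≠ 0 := hstab w hwre
  have hkey : MvPolynomial.aeval z (∑ S ∈ Finset.powersetCard M
        (Finset.univ : Finset (Fin N)),
        MvPolynomial.monomial (expS S) (R.coeff (expS Sᶜ)))
      = (∏ i, z i) * MvPolynomial.aeval w R := by
    rw [map_sum]
    conv_rhs => rw [hR]
    rw [map_sum, Finset.mul_sum]
    refine Finset.sum_nbij' (fun S => Sᶜ) (fun T => Tᶜ) ?_ ?_ ?_ ?_ ?_
    · intro S hS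
      have := (Finset.mem_powersetCard.mp hS).2
      refine Finset.mem_powersetCard.mpr ⟨Finset.subset_univ _, ?_⟩
      rw [Finset.card_compl, this, Fintype.card_fin]
    · intro T hT
      have := (Finset.mem_powersetCard.mp hT).2
      refine Finset.mem_powersetCard.mpr ⟨Finset.subset_univ _, ?_⟩
      rw [Finset.card_compl, this, Fintype.card_fin]
      omega
    · intro S _; exact compl_compl S
    · intro T _; exact compl_compl T
    · intro S hS
      rw [aeval_expS_monomial, aeval_expS_monomial]
      have hprod : (∏ i, z i) = (∏ j ∈ S, z j) * ∏ j ∈ Sᶜ, z j :=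
        (Finset.prod_mul_prod_compl S z).symm
      have hwprod : ∏ j ∈ Sᶜ, w j = (∏ j ∈ Sᶜ, z j)⁻¹ := by
        rw [hw, ← Finset.prod_inv_distrib]
      have hQ : (∏ j ∈ Sᶜ, z j) ≠ 0 := Finset.prod_ne_zero_iff.mpr fun j _ => hzne j
      rw [hwprod, hprod]
      field_simp
  rw [hkey]
  exact mul_ne_zero (Finset.prod_ne_zero_iff.mpr fun i _ => hzne i) hRw
end

section
/- Let p be a homogeneous polynomial of degree n in m variables with nonnegative real coefficients that is H-stable, let A be an m × m real matrix with strictly positive entries, and let ε > 0. Then the polynomial p_{I+εA} defined by p_{I+εA}(Z) = p((I + εA)·Z) for Z ∈ ℂ^m is a homogeneous polynomial of degree n with nonnegative real coefficients that is H-SStable. -/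
/-- A multivariate real polynomial is H-SStable if it does not vanish at any point
all of whose coordinates have nonnegative real part, with at least one coordinate of
positive real part. -/
def HSStable {σ : Type*} [Fintype σ] (p : MvPolynomial σ ℝ) : Prop :=
  ∀ z : σ → ℂ, (∀ i, 0 ≤ (z i).re) → 0 < ∑ i, (z i).re →
    MvPolynomial.aeval z p ≠ 0

/-- The polynomial `p_{I+εA}`, with `p_{I+εA}(Z) = p((I + εA)·Z)`: substitute for the
`i`-th variable the linear form `Σ_j (I + εA)(i,j) X_j`. -/
noncomputable def compLin {m : ℕ} (p : MvPolynomial (Fin m) ℝ)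
    (B : Matrix (Fin m) (Fin m) ℝ) : MvPolynomial (Fin m) ℝ :=
  MvPolynomial.aeval (fun i => ∑ j, MvPolynomial.C (B i j) * MvPolynomial.X j) p

lemma nonneg_coeff_mul {σ : Type*} {q r : MvPolynomial σ ℝ}
    (hq : ∀ c, 0 ≤ q.coeff c) (hr : ∀ c, 0 ≤ r.coeff c) :
    ∀ c, 0 ≤ (q * r).coeff c := by
  classical
  intro c
  rw [MvPolynomial.coeff_mul]
  exact Finset.sum_nonneg fun x _ => mul_nonneg (hq _) (hr _)

lemma nonneg_coeff_prod {σ ι : Type*} (s : Finset ι) (f : ι → MvPolynomial σ ℝ)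
    (hf : ∀ i ∈ s, ∀ c, 0 ≤ (f i).coeff c) :
    ∀ c, 0 ≤ (∏ i ∈ s, f i).coeff c := by
  classical
  induction s using Finset.induction_on with
  | empty =>
    intro c
    simp only [Finset.prod_empty, MvPolynomial.coeff_one]
    split <;> norm_num
  | insert _ _ hx ih =>
    rw [Finset.prod_insert hx]
    exact nonneg_coeff_mul (hf _ (Finset.mem_insert_self _ _))
      (ih fun i hi => hf i (Finset.mem_insert_of_mem hi))

lemma nonneg_coeff_aeval {σ : Type*} (p : MvPolynomial σ ℝ)
    (hp : ∀ c, 0 ≤ p.coeff c) (g : σ → MvPolynomial σ ℝ)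
    (hg : ∀ i c, 0 ≤ (g i).coeff c) :
    ∀ c, 0 ≤ (MvPolynomial.aeval g p).coeff c := by
  classical
  intro c
  conv_rhs => rw [p.as_sum]
  rw [map_sum, MvPolynomial.coeff_sum]
  refine Finset.sum_nonneg fun d _ => ?_
  rw [MvPolynomial.aeval_monomial]
  have h1 : ∀ c', 0 ≤ (d.prod fun i k => g i ^ k).coeff c' := by
    rw [Finsupp.prod]
    refine nonneg_coeff_prod _ _ fun i _ => ?_
    induction d i with
    | zero =>
      intro c'
      simp only [pow_zero, MvPolynomial.coeff_one]
      split <;> norm_num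
    | succ k ih =>
      rw [pow_succ]
      exact nonneg_coeff_mul ih (hg i)
  have : (algebraMap ℝ (MvPolynomial σ ℝ)) (p.coeff d) = MvPolynomial.C (p.coeff d) := rfl
  rw [this, MvPolynomial.coeff_C_mul]
  exact mul_nonneg (hp d) (h1 c)

theorem stmt13 {m n : ℕ} (p : MvPolynomial (Fin m) ℝ)
    (hhom : p.IsHomogeneous n) (hcoeff : ∀ c, 0 ≤ p.coeff c) (hstab : Hstable p)
    (A : Matrix (Fin m) (Fin m) ℝ) (hA : ∀ i j, 0 < A i j) (ε : ℝ) (hε : 0 < ε) :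
    (compLin p ((1 : Matrix (Fin m) (Fin m) ℝ) + ε • A)).IsHomogeneous n ∧
      (∀ c, 0 ≤ (compLin p ((1 : Matrix (Fin m) (Fin m) ℝ) + ε • A)).coeff c) ∧
      HSStable (compLin p ((1 : Matrix (Fin m) (Fin m) ℝ) + ε • A)) := by
  set B := (1 : Matrix (Fin m) (Fin m) ℝ) + ε • A with hBdef
  have hBpos : ∀ i j, 0 < B i j := by
    intro i j
    have : B i j = (if i = j then (1:ℝ) else 0) + ε * A i j := by
      simp [hBdef, Matrix.add_apply, Matrix.one_apply, Matrix.smul_apply]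
    rw [this]
    have := mul_pos hε (hA i j)
    split <;> nlinarith
  set g : Fin m → MvPolynomial (Fin m) ℝ :=
    fun i => ∑ j, MvPolynomial.C (B i j) * MvPolynomial.X j with hgdef
  have hg1 : ∀ i, (g i).IsHomogeneous 1 := by
    intro i
    exact MvPolynomial.IsHomogeneous.sum _ _ _ fun j _ =>
      MvPolynomial.isHomogeneous_C_mul_X _ _
  have hcomp : compLin p B = MvPolynomial.aeval g p := rfl
  refine ⟨?_, ?_, ?_⟩
  · rw [hcomp]
    have := hhom.aeval g hg1
    simpa using this
  · rw [hcomp]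
    refine nonneg_coeff_aeval p hcoeff g fun i c => ?_
    rw [hgdef]
    simp only [MvPolynomial.coeff_sum, MvPolynomial.coeff_C_mul]
    refine Finset.sum_nonneg fun j _ => ?_
    rw [MvPolynomial.coeff_X']
    split
    · simpa using (hBpos i j).le
    · simp
  · intro z hz hzsum hzero
    -- evaluate compLin at z equals p at w := B z
    set w : Fin m → ℂ := fun i => ∑ j, (B i j : ℂ) * z j with hwdef
    have key : MvPolynomial.aeval z (compLin p B) = MvPolynomial.aeval w p := by
      rw [hcomp, MvPolynomial.comp_aeval_apply]
      have hfun : (fun i => MvPolynomial.aeval z (g i)) = w := by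
        funext i
        rw [hgdef, hwdef]
        simp [MvPolynomial.aeval_X]
      rw [hfun]
    have hwre : ∀ i, 0 < (w i).re := by
      intro i
      have hre : (w i).re = ∑ j, B i j * (z j).re := by
        rw [hwdef]
        rw [Complex.re_sum]
        congr 1
        funext j
        simp [Complex.mul_re]
      rw [hre]
      obtain ⟨j0, -, hj0⟩ : ∃ j0 ∈ Finset.univ, 0 < (z j0).re := by
        by_contra h
        push_neg at h
        have : ∑ j, (z j).re ≤ 0 :=
          Finset.sum_nonpos fun j _ => h j (Finset.mem_univ j)
        linarith
      refine Finset.sum_pos' (fun j _ => mul_nonneg (hBpos i j).le (hz j)) ?_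
      exact ⟨j0, Finset.mem_univ j0, mul_pos (hBpos i j0) hj0⟩
    exact hstab w hwre (key ▸ hzero)
end
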